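/- Positivity of solutions: let β̃ > 0, β*, γ* > 0 with β* + γ* = 1, and let φ : [−1,0] → ℝ be continuous and strictly positive. If f : [−1,∞) → ℝ is continuous, differentiable on (0,∞), satisfies f'(t) = β̃·f(t)·(1 − β*·f(t) − γ*·f(t−1)) for t > 0 and f = φ on [−1,0], then f(t) > 0 for all t ≥ 0. -/

import Mathlib

open Real Set

theorem stmt_16 (βt βs γs : ℝ) (hβt : 0 < βt) (hβs : 0 < βs) (hγs : 0 < γs)
    (hsum : βs + γs = 1)
    (φ f : ℝ → ℝ)
    (hφcont : ContinuousOn φ (Set.Icc (-1 : ℝ) 0))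
    (hφpos : ∀ t ∈ Set.Icc (-1 : ℝ) 0, 0 < φ t)
    (hfcont : ContinuousOn f (Set.Ici (-1 : ℝ)))
    (hde : ∀ t : ℝ, 0 < t →
      HasDerivAt f (βt * f t * (1 - βs * f t - γs * f (t - 1))) t)
    (hinit : ∀ t ∈ Set.Icc (-1 : ℝ) 0, f t = φ t) :
    ∀ t : ℝ, 0 ≤ t → 0 < f t := by
  have hf0 : 0 < f 0 := by
    rw [hinit 0 (by norm_num)]
    exact hφpos 0 (by norm_num)
  intro t ht
  rcases eq_or_lt_of_le ht with h0 | ht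
  · rwa [← h0]
  set h : ℝ → ℝ := fun s => βt * (1 - βs * f s - γs * f (s - 1)) with hh
  -- continuity of h at points > 0
  have hfat : ∀ s : ℝ, (-1 : ℝ) < s → ContinuousAt f s := fun s hs =>
    hfcont.continuousAt (Ici_mem_nhds hs)
  have hcontat : ∀ s : ℝ, 0 < s → ContinuousAt h s := by
    intro s hs
    have h1 : ContinuousAt f s := hfat s (by linarith)
    have h2 : ContinuousAt (fun x => f (x - 1)) s := by
      have := (hfat (s - 1) (by linarith)).comp (x := s)
        ((continuous_id.sub continuous_const).continuousAt)
      exact this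
    exact continuousAt_const.mul
      ((continuousAt_const.sub (continuousAt_const.mul h1)).sub
        (continuousAt_const.mul h2))
  -- continuity of h on [0, t]
  have hconth : ContinuousOn h (Set.Icc 0 t) := by
    intro s hs
    rcases eq_or_lt_of_le hs.1 with h0 | hpos
    · -- s = 0 : use continuity within
      have h1 : ContinuousWithinAt f (Set.Icc 0 t) s :=
        (hfcont.mono (fun x hx => le_trans (by norm_num) hx.1)).continuousWithinAt hs
      have h2 : ContinuousWithinAt (fun x => f (x - 1)) (Set.Icc 0 t) s := by
        apply (hfcont.comp ((continuous_id.sub continuous_const).continuousOn)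
          (fun x hx => by simp only [mem_Ici]; have := hx.1; simp; linarith)).continuousWithinAt hs
      exact continuousWithinAt_const.mul
        ((continuousWithinAt_const.sub (continuousWithinAt_const.mul h1)).sub
          (continuousWithinAt_const.mul h2))
    · exact (hcontat s hpos).continuousWithinAt
  set H : ℝ → ℝ := fun u => ∫ s in (0:ℝ)..u, h s with hH
  have hHderiv : ∀ s : ℝ, 0 < s → s ≤ t → HasDerivAt H (h s) s := by
    intro s hs hst
    have hint : IntervalIntegrable h MeasureTheory.volume 0 s := by
      apply ContinuousOn.intervalIntegrable
      rw [uIcc_of_le hs.le]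
      exact hconth.mono (Icc_subset_Icc le_rfl hst)
    have hmeas : StronglyMeasurableAtFilter h (nhds s) MeasureTheory.volume :=
      ContinuousAt.stronglyMeasurableAtFilter isOpen_Ioi
        (fun x hx => hcontat x hx) s hs
    exact intervalIntegral.integral_hasDerivAt_right hint hmeas (hcontat s hs)
  set F : ℝ → ℝ := fun u => f u * Real.exp (-(H u)) with hF
  have hFderiv : ∀ s : ℝ, 0 < s → s ≤ t → HasDerivAt F 0 s := by
    intro s hs hst
    have h1 : HasDerivAt f (h s * f s) s := by
      have := hde s hs
      convert this using 1
      simp only [hh]; ring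
    have h2 : HasDerivAt (fun u => Real.exp (-(H u))) (-(h s) * Real.exp (-(H s))) s := by
      have := ((hHderiv s hs hst).neg).exp
      exact this.congr_deriv (by show rexp (-H s) * -h s = -h s * rexp (-H s); ring)
    have := h1.mul h2
    exact this.congr_deriv (by ring)
  have hconst : ∀ a ∈ Set.Ioc (0:ℝ) t, F t = F a := by
    intro a ha
    have key := constant_of_has_deriv_right_zero (f := F) (a := a) (b := t)
      (fun s hs => (hFderiv s (lt_of_lt_of_le ha.1 hs.1) hs.2).continuousAt.continuousWithinAt)
      (fun s hs => ((hFderiv s (lt_of_lt_of_le ha.1 hs.1) hs.2.le).hasDerivWithinAt))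
    exact key t ⟨ha.2, le_rfl⟩
  -- continuity of F at 0 within Icc 0 t
  have hintOn : MeasureTheory.IntegrableOn h (Set.uIcc 0 t) MeasureTheory.volume := by
    rw [uIcc_of_le ht.le]
    exact hconth.integrableOn_compact isCompact_Icc
  have hHcont : ContinuousOn H (Set.Icc 0 t) := by
    have := intervalIntegral.continuousOn_primitive_interval hintOn
    rwa [uIcc_of_le ht.le] at this
  have hFcont0 : ContinuousWithinAt F (Set.Icc 0 t) 0 := by
    apply ContinuousWithinAt.mul
    · exact (hfcont.mono (fun x hx => le_trans (by norm_num) hx.1)).continuousWithinAt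
        ⟨le_rfl, ht.le⟩
    · exact (Real.continuous_exp.continuousAt.comp_continuousWithinAt
        ((hHcont.continuousWithinAt ⟨le_rfl, ht.le⟩).neg))
  -- take limit a → 0+
  have hne : (nhdsWithin (0:ℝ) (Set.Ioc 0 t)).NeBot := by
    rw [nhdsWithin_Ioc_eq_nhdsGT ht]
    infer_instance
  have t1 : Filter.Tendsto F (nhdsWithin (0:ℝ) (Set.Ioc 0 t)) (nhds (F 0)) :=
    hFcont0.mono Ioc_subset_Icc_self
  have t2 : Filter.Tendsto F (nhdsWithin (0:ℝ) (Set.Ioc 0 t)) (nhds (F t)) := by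
    apply Filter.Tendsto.congr' _ tendsto_const_nhds
    filter_upwards [self_mem_nhdsWithin] with a ha
    exact hconst a ha
  have hFt : F t = F 0 := tendsto_nhds_unique t2 t1
  have hF0val : F 0 = f 0 := by
    simp [hF, hH, intervalIntegral.integral_same]
  have : 0 < f t * Real.exp (-(H t)) := by
    have : F t = f 0 := hFt.trans hF0val
    rw [show f t * Real.exp (-(H t)) = F t from rfl, this]
    exact hf0
  nlinarith [Real.exp_pos (-(H t)), this]
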